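/- Let B : H → H be monotone and L-Lipschitz with zero z⋆, α ∈ (0, 1/L), and let (z_k) be the FEG iterates with β_k = 1/(k+1). Define V_k = (α k²/2)‖B z_k‖² + k⟨B z_k, z_k - z_0⟩ + (1/(2α))‖z_0 - z⋆‖². Then V_k ≥ 0 for all k, and V_k - V_{k+1} ≥ (α(1 - α²L²)/2)‖k • B z_k - (k+1) • B z_{k+1/2}‖² for all k ≥ 0. -/

import Mathlib

open RealInnerProductSpace

theorem stmt_8 {H : Type*} [NormedAddCommGroup H] [InnerProductSpace ℝ H]
    (B : H → H) (L α : ℝ) (hL : 0 < L)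
    (hmono : ∀ u v : H, 0 ≤ ⟪B u - B v, u - v⟫)
    (hlip : ∀ u v : H, ‖B u - B v‖ ≤ L * ‖u - v‖)
    (zs : H) (hzs : B zs = 0)
    (hα0 : 0 < α) (hα1 : α < 1 / L)
    (z zhalf : ℕ → H)
    (hzhalf : ∀ k : ℕ, zhalf k =
      (1 / ((k : ℝ) + 1)) • z 0 + (1 - 1 / ((k : ℝ) + 1)) • (z k - α • B (z k)))
    (hz : ∀ k : ℕ, z (k + 1) =
      (1 / ((k : ℝ) + 1)) • z 0 + (1 - 1 / ((k : ℝ) + 1)) • z k - α • B (zhalf k))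
    (V : ℕ → ℝ)
    (hV : ∀ k : ℕ, V k = α * (k : ℝ) ^ 2 / 2 * ‖B (z k)‖ ^ 2 +
      (k : ℝ) * ⟪B (z k), z k - z 0⟫ + 1 / (2 * α) * ‖z 0 - zs‖ ^ 2) :
    (∀ k : ℕ, 0 ≤ V k) ∧
      (∀ k : ℕ, α * (1 - α ^ 2 * L ^ 2) / 2 *
          ‖(k : ℝ) • B (z k) - ((k : ℝ) + 1) • B (zhalf k)‖ ^ 2 ≤ V k - V (k + 1)) := by
  constructor
  · intro k
    have hmon := hmono (z k) zs
    rw [hzs, sub_zero] at hmon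
    have hsplit : ⟪B (z k), z k - z 0⟫ = ⟪B (z k), z k - zs⟫ + ⟪B (z k), zs - z 0⟫ := by
      rw [← inner_add_right, sub_add_sub_cancel]
    have hexp : ‖(α * (k:ℝ)) • B (z k) + (zs - z 0)‖ ^ 2
        = (α*(k:ℝ))^2 * ‖B (z k)‖^2 + 2*(α*(k:ℝ))*⟪B (z k), zs - z 0⟫ + ‖zs - z 0‖^2 := by
      rw [@norm_add_sq_real, norm_smul, Real.norm_eq_abs, mul_pow, sq_abs,
        real_inner_smul_left]
      ring
    have hrev : ‖z 0 - zs‖ = ‖zs - z 0‖ := norm_sub_rev _ _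
    have h3 : α * (k:ℝ)^2/2 * ‖B (z k)‖^2 + (k:ℝ) * ⟪B (z k), zs - z 0⟫
        + 1/(2*α) * ‖zs - z 0‖^2
        = 1/(2*α) * ‖(α * (k:ℝ)) • B (z k) + (zs - z 0)‖^2 := by
      rw [hexp]; field_simp
    have h1 : 0 ≤ (k:ℝ) * ⟪B (z k), z k - zs⟫ := mul_nonneg (Nat.cast_nonneg k) hmon
    have h2 : 0 ≤ 1/(2*α) * ‖(α * (k:ℝ)) • B (z k) + (zs - z 0)‖ ^ 2 := by positivity
    rw [hV, hsplit, hrev]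
    nlinarith [h1, h2, h3]
  · intro k
    have hn0 : (0:ℝ) ≤ (k:ℝ) := Nat.cast_nonneg k
    have hm : ((k:ℝ) + 1) ≠ 0 := by positivity
    -- multiplied recursions
    have h1 : ((k:ℝ)+1) • z (k+1) = z 0 + (k:ℝ) • z k - (((k:ℝ)+1)*α) • B (zhalf k) := by
      rw [hz k]; match_scalars <;> field_simp <;> ring
    have h2 : ((k:ℝ)+1) • zhalf k = z 0 + (k:ℝ) • z k - ((k:ℝ)*α) • B (z k) := by
      rw [hzhalf k]; match_scalars <;> field_simp <;> ring
    -- vector identities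
    have e1 : ((k:ℝ)+1) • (z (k+1) - z 0)
        = (k:ℝ) • (z k - z 0) - (((k:ℝ)+1)*α) • B (zhalf k) := by
      rw [smul_sub, h1]; module
    have e2 : ((k:ℝ)+1) • (z (k+1) - z k)
        = -(z k - z 0) - (((k:ℝ)+1)*α) • B (zhalf k) := by
      rw [smul_sub, h1]; module
    have e3 : ((k:ℝ)+1) • (z (k+1) - zhalf k)
        = α • ((k:ℝ) • B (z k) - ((k:ℝ)+1) • B (zhalf k)) := by
      rw [smul_sub, h1, h2]; module
    -- Lipschitz bound
    have hlipk := hlip (z (k+1)) (zhalf k)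
    have hnorm3 : ((k:ℝ)+1) * ‖z (k+1) - zhalf k‖
        = α * ‖(k:ℝ) • B (z k) - ((k:ℝ)+1) • B (zhalf k)‖ := by
      have := congrArg norm e3
      rwa [norm_smul, norm_smul, Real.norm_eq_abs, Real.norm_eq_abs,
        abs_of_pos (by positivity : (0:ℝ) < (k:ℝ)+1), abs_of_pos hα0] at this
    have hLip2 : (((k:ℝ)+1) * ‖B (z (k+1)) - B (zhalf k)‖)^2
        ≤ (L*α)^2 * ‖(k:ℝ) • B (z k) - ((k:ℝ)+1) • B (zhalf k)‖^2 := by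
      have hb : ((k:ℝ)+1) * ‖B (z (k+1)) - B (zhalf k)‖
          ≤ L * (α * ‖(k:ℝ) • B (z k) - ((k:ℝ)+1) • B (zhalf k)‖) := by
        rw [← hnorm3]
        calc ((k:ℝ)+1) * ‖B (z (k+1)) - B (zhalf k)‖
            ≤ ((k:ℝ)+1) * (L * ‖z (k+1) - zhalf k‖) :=
              mul_le_mul_of_nonneg_left hlipk (by positivity)
          _ = L * (((k:ℝ)+1) * ‖z (k+1) - zhalf k‖) := by ring
      nlinarith [mul_nonneg (by positivity : (0:ℝ) ≤ (k:ℝ)+1)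
        (norm_nonneg (B (z (k+1)) - B (zhalf k)))]
    -- monotonicity
    have hM : 0 ≤ ⟪B (z (k+1)) - B (z k), z (k+1) - z k⟫ := hmono (z (k+1)) (z k)
    -- scalar facts
    have F1 : ((k:ℝ)+1) * ⟪B (z (k+1)) - B (z k), z (k+1) - z k⟫
        = -⟪B (z (k+1)), z k - z 0⟫ + ⟪B (z k), z k - z 0⟫
          - ((k:ℝ)+1)*α*⟪B (z (k+1)), B (zhalf k)⟫
          + ((k:ℝ)+1)*α*⟪B (z k), B (zhalf k)⟫ := by
      rw [← real_inner_smul_right, e2]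
      simp only [inner_sub_left, inner_sub_right, inner_neg_right, real_inner_smul_right]
      ring
    have F2 : ((k:ℝ)+1) * ⟪B (z (k+1)), z (k+1) - z 0⟫
        = (k:ℝ) * ⟪B (z (k+1)), z k - z 0⟫ - ((k:ℝ)+1)*α*⟪B (z (k+1)), B (zhalf k)⟫ := by
      rw [← real_inner_smul_right, e1]
      simp only [inner_sub_right, real_inner_smul_right]
    have F3 : ‖(k:ℝ) • B (z k) - ((k:ℝ)+1) • B (zhalf k)‖^2
        = (k:ℝ)^2 * ‖B (z k)‖^2 - 2*(k:ℝ)*((k:ℝ)+1)*⟪B (z k), B (zhalf k)⟫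
          + ((k:ℝ)+1)^2 * ‖B (zhalf k)‖^2 := by
      rw [@norm_sub_sq_real, norm_smul, norm_smul, real_inner_smul_left,
        real_inner_smul_right, Real.norm_eq_abs, Real.norm_eq_abs, mul_pow, mul_pow,
        sq_abs, sq_abs]
      ring
    have F4 : ‖B (z (k+1)) - B (zhalf k)‖^2
        = ‖B (z (k+1))‖^2 - 2*⟪B (z (k+1)), B (zhalf k)⟫ + ‖B (zhalf k)‖^2 := by
      rw [@norm_sub_sq_real]
    have hid : V k - V (k+1)
        = (k:ℝ)*((k:ℝ)+1)*⟪B (z (k+1)) - B (z k), z (k+1) - z k⟫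
          + α/2 * ‖(k:ℝ) • B (z k) - ((k:ℝ)+1) • B (zhalf k)‖^2
          - α/2 * (((k:ℝ)+1) * ‖B (z (k+1)) - B (zhalf k)‖)^2 := by
      rw [hV k, hV (k+1)]
      push_cast
      rw [F3, mul_pow, F4]
      linear_combination (-(k:ℝ)) * F1 - F2
    rw [hid]
    have hMn : 0 ≤ (k:ℝ)*((k:ℝ)+1)*⟪B (z (k+1)) - B (z k), z (k+1) - z k⟫ :=
      mul_nonneg (by positivity) hM
    have key : α/2 * (((k:ℝ)+1) * ‖B (z (k+1)) - B (zhalf k)‖)^2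
        ≤ α/2 * ((L*α)^2 * ‖(k:ℝ) • B (z k) - ((k:ℝ)+1) • B (zhalf k)‖^2) :=
      mul_le_mul_of_nonneg_left hLip2 (by positivity)
    linarith [hMn, key]
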